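/- Let a, b ∈ ℂ with a ≠ 0, let c be a real number, let ξ ∈ (−1,1), ε ∈ {−1,1}, and set s := √(1−ξ²) and F := ε·i·s. Assume D := (conj(a)+conj(b))ξ + (conj(a)−conj(b))F ≠ 0. Define w := (c/2)·((1 − conj(b)/conj(a)) + (1 + conj(b)/conj(a))·ξ/F) and p := conj(a)·((a+b)ξ − (a−b)F)/D. Then p·w + a·conj(w) = 0. -/

import Mathlib

/-- The boundary values of the one-cavity solution `ω'`, `ψ` on the two sides of the slit
satisfy the equal-strength boundary condition `ψ·ω' + a·conj(ω') = 0`. -/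
theorem stmt_5 (a b : ℂ) (ha : a ≠ 0) (c : ℝ) (ξ : ℝ) (hξ : -1 < ξ ∧ ξ < 1)
    (ε : ℝ) (hε : ε = -1 ∨ ε = 1)
    (hD : ((starRingEnd ℂ) a + (starRingEnd ℂ) b) * (ξ : ℂ) +
       ((starRingEnd ℂ) a - (starRingEnd ℂ) b) *
         ((ε : ℂ) * Complex.I * (Real.sqrt (1 - ξ ^ 2) : ℂ)) ≠ 0) :
    ((starRingEnd ℂ) a *
        ((a + b) * (ξ : ℂ) -
          (a - b) * ((ε : ℂ) * Complex.I * (Real.sqrt (1 - ξ ^ 2) : ℂ))) /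
        (((starRingEnd ℂ) a + (starRingEnd ℂ) b) * (ξ : ℂ) +
          ((starRingEnd ℂ) a - (starRingEnd ℂ) b) *
            ((ε : ℂ) * Complex.I * (Real.sqrt (1 - ξ ^ 2) : ℂ)))) *
      ((c : ℂ) / 2 *
        ((1 - (starRingEnd ℂ) b / (starRingEnd ℂ) a) +
          (1 + (starRingEnd ℂ) b / (starRingEnd ℂ) a) * (ξ : ℂ) /
            ((ε : ℂ) * Complex.I * (Real.sqrt (1 - ξ ^ 2) : ℂ)))) +
      a * (starRingEnd ℂ)
        ((c : ℂ) / 2 *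
          ((1 - (starRingEnd ℂ) b / (starRingEnd ℂ) a) +
            (1 + (starRingEnd ℂ) b / (starRingEnd ℂ) a) * (ξ : ℂ) /
              ((ε : ℂ) * Complex.I * (Real.sqrt (1 - ξ ^ 2) : ℂ)))) = 0 := by
  have hs : (Real.sqrt (1 - ξ ^ 2) : ℂ) ≠ 0 := by
    have : 0 < 1 - ξ ^ 2 := by nlinarith [hξ.1, hξ.2]
    exact_mod_cast Real.sqrt_ne_zero'.mpr this
  have hε0 : (ε : ℂ) ≠ 0 := by rcases hε with h | h <;> simp [h]
  have hA : (starRingEnd ℂ) a ≠ 0 := by simpa using ha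
  set s : ℂ := (Real.sqrt (1 - ξ ^ 2) : ℂ) with hs_def
  set F : ℂ := (ε : ℂ) * Complex.I * s with hF_def
  have hF : F ≠ 0 := mul_ne_zero (mul_ne_zero hε0 Complex.I_ne_zero) hs
  set A : ℂ := (starRingEnd ℂ) a with hA_def
  set B : ℂ := (starRingEnd ℂ) b with hB_def
  set D : ℂ := (A + B) * (ξ : ℂ) + (A - B) * F with hD_def
  set N : ℂ := (a + b) * (ξ : ℂ) - (a - b) * F with hN_def
  have hw : (starRingEnd ℂ) ((c : ℂ) / 2 * ((1 - B / A) + (1 + B / A) * (ξ : ℂ) / F)) =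
      (c : ℂ) / 2 * (N / (a * (-F))) := by
    simp only [map_mul, map_div₀, map_add, map_sub, map_one, map_ofNat, hA_def, hB_def,
      hF_def, hN_def, hs_def, Complex.conj_conj, Complex.conj_I, Complex.conj_ofReal]
    field_simp [show (Real.sqrt (1 - ξ ^ 2) : ℂ) ≠ 0 from hs]
    ring
  have hfac : (1 - B / A) + (1 + B / A) * (ξ : ℂ) / F = D / (A * F) := by
    rw [hD_def]
    field_simp
    ring
  rw [hw, hfac]
  field_simp
  ring
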